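/- Let 0 < r < s and A, B ∈ ℝ. Let f : ℝ² → ℝ be continuously differentiable on an open set containing the closed annulus {x : r ≤ ‖x‖ ≤ s}, and suppose f(x) = A whenever ‖x‖ = r and f(x) = B whenever ‖x‖ = s. Then ∫_{{r < ‖x‖ < s}} ‖∇f(x)‖² dx ≥ 2π·(B − A)²/ln(s/r). (Consequently, half the Dirichlet energy of f on the annulus is at least π(B−A)²/ln(s/r), the energy of the harmonic interpolant.) -/

import Mathlib

open Real MeasureTheory

lemma norm_gradient_eq' {E : Type*} [NormedAddCommGroup E] [InnerProductSpace ℝ E]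
    [CompleteSpace E] (f : E → ℝ) (x : E) : ‖gradient f x‖ = ‖fderiv ℝ f x‖ := by
  rw [gradient]; exact LinearIsometryEquiv.norm_map _ _

lemma key1d {r s A B : ℝ} (hr : 0 < r) (hrs : r < s) {h h' : ℝ → ℝ}
    (hd : ∀ ρ ∈ Set.Icc r s, HasDerivAt h (h' ρ) ρ)
    (hc : ContinuousOn h' (Set.Icc r s))
    (ha : h r = A) (hb : h s = B) :
    (B - A) ^ 2 / Real.log (s / r) ≤ ∫ ρ in Set.Ioo r s, ρ * h' ρ ^ 2 := by
  have hsr1 : 1 < s / r := (one_lt_div hr).2 hrs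
  have hL : 0 < Real.log (s / r) := Real.log_pos hsr1
  set L := Real.log (s / r) with hLdef
  set c := (B - A) / L with hcdef
  have h0 : (0:ℝ) ∉ Set.Icc r s := fun h0 => absurd h0.1 (not_le.2 hr)
  have huIcc : Set.uIcc r s = Set.Icc r s := Set.uIcc_of_le hrs.le
  have hinth' : IntervalIntegrable h' volume r s := by
    apply ContinuousOn.intervalIntegrable; rwa [huIcc]
  have hFTC : ∫ ρ in r..s, h' ρ = B - A := by
    rw [intervalIntegral.integral_eq_sub_of_hasDerivAt (fun ρ hρ => hd ρ (huIcc ▸ hρ)) hinth',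
      ha, hb]
  have hlog : ∫ ρ in r..s, 1 / ρ = L := by
    rw [integral_one_div (by rwa [huIcc])]
  -- convert interval integrals to Ioo set integrals
  have hIoo : ∀ g : ℝ → ℝ, ∫ ρ in r..s, g ρ = ∫ ρ in Set.Ioo r s, g ρ := by
    intro g
    rw [intervalIntegral.integral_of_le hrs.le, MeasureTheory.integral_Ioc_eq_integral_Ioo]
  have hinth'2 : IntegrableOn h' (Set.Ioo r s) := by
    exact (hc.integrableOn_compact isCompact_Icc).mono_set Set.Ioo_subset_Icc_self
  have hintinv : IntegrableOn (fun ρ : ℝ => 1 / ρ) (Set.Ioo r s) := by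
    apply (ContinuousOn.integrableOn_compact isCompact_Icc _).mono_set Set.Ioo_subset_Icc_self
    exact continuousOn_const.div continuousOn_id (fun x hx => by intro h; exact h0 (h ▸ hx))
  have hintlow : IntegrableOn (fun ρ => 2 * c * h' ρ - c ^ 2 * (1 / ρ)) (Set.Ioo r s) :=
    ((hinth'2.const_mul _).sub (hintinv.const_mul _))
  have hintbig : IntegrableOn (fun ρ => ρ * h' ρ ^ 2) (Set.Ioo r s) := by
    apply (ContinuousOn.integrableOn_compact isCompact_Icc _).mono_set Set.Ioo_subset_Icc_self
    exact continuousOn_id.mul (hc.pow 2)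
  have hmono : ∫ ρ in Set.Ioo r s, (2 * c * h' ρ - c ^ 2 * (1 / ρ)) ≤
      ∫ ρ in Set.Ioo r s, ρ * h' ρ ^ 2 := by
    apply setIntegral_mono_on hintlow hintbig measurableSet_Ioo
    intro ρ hρ
    have hρ0 : 0 < ρ := lt_trans hr hρ.1
    have key : ρ * (h' ρ - c / ρ) ^ 2 = ρ * h' ρ ^ 2 - 2 * c * h' ρ + c ^ 2 * (1 / ρ) := by
      field_simp; ring
    nlinarith [mul_nonneg hρ0.le (sq_nonneg (h' ρ - c / ρ))]
  have hval : ∫ ρ in Set.Ioo r s, (2 * c * h' ρ - c ^ 2 * (1 / ρ)) = (B - A) ^ 2 / L := by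
    rw [integral_sub (hinth'2.const_mul _) (hintinv.const_mul _),
      integral_const_mul, integral_const_mul, ← hIoo h', ← hIoo (fun ρ => 1/ρ), hFTC, hlog,
      hcdef]
    field_simp
    ring
  linarith [hmono, hval.symm.le]

lemma keyray {r s A B : ℝ} (hr : 0 < r) (hrs : r < s)
    {E : Type*} [NormedAddCommGroup E] [InnerProductSpace ℝ E] [CompleteSpace E]
    {f : E → ℝ} {U : Set E} (hU : IsOpen U)
    (hsub : {x : E | r ≤ ‖x‖ ∧ ‖x‖ ≤ s} ⊆ U)
    (hf : ContDiffOn ℝ 1 f U)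
    (hA : ∀ x : E, ‖x‖ = r → f x = A)
    (hB : ∀ x : E, ‖x‖ = s → f x = B)
    {v : E} (hv : ‖v‖ = 1) :
    (B - A) ^ 2 / Real.log (s / r) ≤ ∫ ρ in Set.Ioo r s, ρ * ‖gradient f (ρ • v)‖ ^ 2 := by
  have hnorm : ∀ ρ ∈ Set.Icc r s, ‖ρ • v‖ = ρ := by
    intro ρ hρ
    rw [norm_smul, hv, mul_one, Real.norm_eq_abs, abs_of_pos (lt_of_lt_of_le hr hρ.1)]
  have hmem : ∀ ρ ∈ Set.Icc r s, ρ • v ∈ U := by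
    intro ρ hρ
    exact hsub ⟨by rw [hnorm ρ hρ]; exact hρ.1, by rw [hnorm ρ hρ]; exact hρ.2⟩
  have hdiff : ∀ ρ ∈ Set.Icc r s, DifferentiableAt ℝ f (ρ • v) := fun ρ hρ =>
    (hf.differentiableOn one_ne_zero).differentiableAt (hU.mem_nhds (hmem ρ hρ))
  set h' : ℝ → ℝ := fun ρ => (fderiv ℝ f (ρ • v)) v with hh'
  have hd : ∀ ρ ∈ Set.Icc r s, HasDerivAt (fun ρ => f (ρ • v)) (h' ρ) ρ := by
    intro ρ hρ
    have hcurve : HasDerivAt (fun t : ℝ => t • v) v ρ := by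
      simpa using (hasDerivAt_id ρ).smul_const v
    exact (hdiff ρ hρ).hasFDerivAt.comp_hasDerivAt ρ hcurve
  have hfd : ContinuousOn (fderiv ℝ f) U := hf.continuousOn_fderiv_of_isOpen hU le_rfl
  have hcurvecont : ContinuousOn (fun ρ : ℝ => ρ • v) (Set.Icc r s) :=
    (continuous_id.smul continuous_const).continuousOn
  have hfdc : ContinuousOn (fun ρ => fderiv ℝ f (ρ • v)) (Set.Icc r s) :=
    hfd.comp hcurvecont hmem
  have hc : ContinuousOn h' (Set.Icc r s) := hfdc.clm_apply continuousOn_const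
  have key := key1d hr hrs hd hc
    (hA _ (hnorm r ⟨le_rfl, hrs.le⟩)) (hB _ (hnorm s ⟨hrs.le, le_rfl⟩))
  refine key.trans (setIntegral_mono_on ?_ ?_ measurableSet_Ioo ?_)
  · exact (ContinuousOn.integrableOn_compact isCompact_Icc
      (continuousOn_id.mul (hc.pow 2))).mono_set Set.Ioo_subset_Icc_self
  · apply (ContinuousOn.integrableOn_compact isCompact_Icc _).mono_set Set.Ioo_subset_Icc_self
    have h1 : ContinuousOn (fun ρ => ρ * ‖fderiv ℝ f (ρ • v)‖ ^ 2) (Set.Icc r s) :=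
      continuousOn_id.mul (hfdc.norm.pow 2)
    exact h1.congr fun ρ _ => by rw [norm_gradient_eq']
  · intro ρ hρ
    have hρ0 : (0:ℝ) ≤ ρ := (lt_trans hr hρ.1).le
    apply mul_le_mul_of_nonneg_left _ hρ0
    rw [norm_gradient_eq']
    calc h' ρ ^ 2 = |h' ρ| ^ 2 := (sq_abs _).symm
    _ ≤ ‖fderiv ℝ f (ρ • v)‖ ^ 2 := by
        apply pow_le_pow_left₀ (abs_nonneg _)
        simpa [hv] using (fderiv ℝ f (ρ • v)).le_opNorm v

theorem stmt_6 (r s A B : ℝ) (hr : 0 < r) (hrs : r < s)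
    (f : EuclideanSpace ℝ (Fin 2) → ℝ)
    (U : Set (EuclideanSpace ℝ (Fin 2))) (hU : IsOpen U)
    (hsub : {x : EuclideanSpace ℝ (Fin 2) | r ≤ ‖x‖ ∧ ‖x‖ ≤ s} ⊆ U)
    (hf : ContDiffOn ℝ 1 f U)
    (hA : ∀ x : EuclideanSpace ℝ (Fin 2), ‖x‖ = r → f x = A)
    (hB : ∀ x : EuclideanSpace ℝ (Fin 2), ‖x‖ = s → f x = B) :
    (∫ x in {x : EuclideanSpace ℝ (Fin 2) | r < ‖x‖ ∧ ‖x‖ < s}, ‖gradient f x‖ ^ 2)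
      ≥ 2 * π * (B - A) ^ 2 / Real.log (s / r) := by
  have hL : 0 < Real.log (s / r) := Real.log_pos ((one_lt_div hr).2 hrs)
  set c0 := (B - A) ^ 2 / Real.log (s / r) with hc0
  set φ := Complex.orthonormalBasisOneI.repr with hφ
  set G : EuclideanSpace ℝ (Fin 2) → ℝ := fun x => ‖gradient f x‖ ^ 2 with hG
  set S : Set (EuclideanSpace ℝ (Fin 2)) := {x | r < ‖x‖ ∧ ‖x‖ < s} with hS
  have hSopen : IsOpen S := by
    rw [hS, Set.setOf_and]
    exact (isOpen_lt continuous_const continuous_norm).inter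
      (isOpen_lt continuous_norm continuous_const)
  have hmp : MeasurePreserving φ volume volume :=
    Complex.orthonormalBasisOneI.measurePreserving_repr
  have hemb : MeasurableEmbedding φ := φ.toHomeomorph.measurableEmbedding
  have hφnorm : ∀ z : ℂ, ‖φ z‖ = ‖z‖ := fun z => φ.norm_map z
  set W : ℝ → ℂ := fun θ => Real.cos θ + Real.sin θ * Complex.I with hW
  have hWnorm : ∀ θ, ‖W θ‖ = 1 := fun θ => by
    rw [hW]
    simp only [Complex.ofReal_cos, Complex.ofReal_sin]
    exact Complex.norm_cos_add_sin_mul_I θ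
  set H : ℝ × ℝ → ℝ := fun p => p.1 * G (φ ((p.1 : ℂ) * W p.2)) with hH
  have hnormmul : ∀ p : ℝ × ℝ, ‖φ ((p.1 : ℂ) * W p.2)‖ = |p.1| := fun p => by
    rw [hφnorm, norm_mul, Complex.norm_real, Real.norm_eq_abs, hWnorm, mul_one]
  have hGcont : ContinuousOn G U := by
    have h1 : ContinuousOn (fun x => ‖fderiv ℝ f x‖ ^ 2) U :=
      (hf.continuousOn_fderiv_of_isOpen hU le_rfl).norm.pow 2
    exact h1.congr fun x _ => by simp only [hG, norm_gradient_eq']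
  have step1 : ∫ x in S, G x = ∫ z in φ ⁻¹' S, G (φ z) :=
    (hmp.setIntegral_preimage_emb hemb G S).symm
  have hSm : MeasurableSet (φ ⁻¹' S) := (hSopen.preimage φ.continuous).measurableSet
  have step2 : ∫ z in φ ⁻¹' S, G (φ z) = ∫ z, Set.indicator (φ ⁻¹' S) (fun z => G (φ z)) z :=
    (integral_indicator hSm).symm
  have step3 := Complex.integral_comp_polarCoord_symm
    (Set.indicator (φ ⁻¹' S) (fun z => G (φ z)))
  set T : Set (ℝ × ℝ) := Set.Ioo r s ×ˢ Set.Ioo (-π) π with hT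
  have hTm : MeasurableSet T := measurableSet_Ioo.prod measurableSet_Ioo
  have hTsub : T ⊆ polarCoord.target := by
    rw [polarCoord_target]
    exact Set.prod_mono (fun x hx => lt_trans hr hx.1) subset_rfl
  have htargetm : MeasurableSet polarCoord.target := by
    rw [polarCoord_target]; exact measurableSet_Ioi.prod measurableSet_Ioo
  have hptwise : ∀ p ∈ polarCoord.target,
      p.1 • Set.indicator (φ ⁻¹' S) (fun z => G (φ z)) (Complex.polarCoord.symm p)
        = Set.indicator T H p := by
    intro p hp
    rw [polarCoord_target] at hp
    have hp1 : 0 < p.1 := hp.1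
    rw [Complex.polarCoord_symm_apply]
    have habs : ((p.1 : ℂ) * (Real.cos p.2 + Real.sin p.2 * Complex.I)) = (p.1 : ℂ) * W p.2 := by
      rw [hW]
    rw [habs]
    have hmemiff : ((p.1 : ℂ) * W p.2 ∈ φ ⁻¹' S) ↔ p ∈ T := by
      simp only [Set.mem_preimage, hS, Set.mem_setOf_eq, hnormmul p,
        abs_of_pos hp1, hT, Set.mem_prod, Set.mem_Ioo]
      exact ⟨fun h => ⟨h, hp.2⟩, fun h => h.1⟩
    by_cases hmem : p ∈ T
    · rw [Set.indicator_of_mem hmem, Set.indicator_of_mem (hmemiff.2 hmem)]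
      simp [hH, smul_eq_mul]
    · rw [Set.indicator_of_notMem hmem,
        Set.indicator_of_notMem (fun h => hmem (hmemiff.1 h)), smul_zero]
  have step4 : (∫ p in polarCoord.target,
      p.1 • Set.indicator (φ ⁻¹' S) (fun z => G (φ z)) (Complex.polarCoord.symm p))
      = ∫ p in T, H p := by
    rw [setIntegral_congr_fun htargetm hptwise, setIntegral_indicator hTm,
      Set.inter_eq_self_of_subset_right hTsub]
  -- integrability
  have hccont : Continuous (fun p : ℝ × ℝ => φ ((p.1 : ℂ) * W p.2)) := by
    apply φ.continuous.comp
    rw [hW]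
    fun_prop
  have hmap : Set.MapsTo (fun p : ℝ × ℝ => φ ((p.1 : ℂ) * W p.2))
      (Set.Icc r s ×ˢ Set.Icc (-π) π) U := by
    intro p hp
    apply hsub
    have h1 : ‖φ ((p.1 : ℂ) * W p.2)‖ = p.1 := by
      rw [hnormmul p, abs_of_pos (lt_of_lt_of_le hr hp.1.1)]
    exact ⟨by rw [h1]; exact hp.1.1, by rw [h1]; exact hp.1.2⟩
  have hHcont : ContinuousOn H (Set.Icc r s ×ˢ Set.Icc (-π) π) := by
    rw [hH]
    exact continuous_fst.continuousOn.mul (hGcont.comp hccont.continuousOn hmap)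
  have hHintT : IntegrableOn H T :=
    (hHcont.integrableOn_compact (isCompact_Icc.prod isCompact_Icc)).mono_set
      (Set.prod_mono Set.Ioo_subset_Icc_self Set.Ioo_subset_Icc_self)
  have hrestr : (volume : Measure (ℝ × ℝ)).restrict T
      = (volume.restrict (Set.Ioo r s)).prod (volume.restrict (Set.Ioo (-π) π)) := by
    rw [Measure.prod_restrict, ← Measure.volume_eq_prod, hT]
  have hHint' : Integrable H
      ((volume.restrict (Set.Ioo r s)).prod (volume.restrict (Set.Ioo (-π) π))) := by
    rw [← hrestr]; exact hHintT
  have step6 : ∫ p in T, H p = ∫ θ in Set.Ioo (-π) π, ∫ ρ in Set.Ioo r s, H (ρ, θ) := by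
    rw [hrestr]
    exact integral_prod_symm H hHint'
  have hmarg : IntegrableOn (fun θ => ∫ ρ in Set.Ioo r s, H (ρ, θ)) (Set.Ioo (-π) π) :=
    hHint'.integral_prod_right
  have hlow : ∀ θ ∈ Set.Ioo (-π) π, c0 ≤ ∫ ρ in Set.Ioo r s, H (ρ, θ) := by
    intro θ _
    have hv : ‖φ (W θ)‖ = 1 := by rw [hφnorm, hWnorm]
    have heq : ∀ ρ : ℝ, H (ρ, θ) = ρ * ‖gradient f (ρ • φ (W θ))‖ ^ 2 := by
      intro ρ
      have h2 : φ ((ρ : ℂ) * W θ) = ρ • φ (W θ) := by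
        rw [← Complex.real_smul]
        exact φ.map_smul ρ (W θ)
      rw [hH]
      simp only [h2, hG]
    calc c0 ≤ ∫ ρ in Set.Ioo r s, ρ * ‖gradient f (ρ • φ (W θ))‖ ^ 2 :=
          keyray hr hrs hU hsub hf hA hB hv
      _ = ∫ ρ in Set.Ioo r s, H (ρ, θ) := by simp only [heq]
  have hconstint : IntegrableOn (fun _ : ℝ => c0) (Set.Ioo (-π) π) :=
    integrableOn_const measure_Ioo_lt_top.ne
  have step7 : ∫ _ in Set.Ioo (-π) π, c0 ≤ ∫ θ in Set.Ioo (-π) π, ∫ ρ in Set.Ioo r s, H (ρ, θ) :=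
    setIntegral_mono_on hconstint hmarg measurableSet_Ioo hlow
  have hconstval : (∫ _ in Set.Ioo (-π) π, c0) = 2 * π * c0 := by
    rw [setIntegral_const, measureReal_def, Real.volume_Ioo,
      ENNReal.toReal_ofReal (by have := Real.pi_pos; linarith : (0:ℝ) ≤ π - -π), smul_eq_mul]
    ring
  have hfinal : 2 * π * (B - A) ^ 2 / Real.log (s / r) = 2 * π * c0 := by
    rw [hc0]; ring
  rw [ge_iff_le, hfinal]
  calc 2 * π * c0 = ∫ _ in Set.Ioo (-π) π, c0 := hconstval.symm
    _ ≤ ∫ θ in Set.Ioo (-π) π, ∫ ρ in Set.Ioo r s, H (ρ, θ) := step7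
    _ = ∫ p in T, H p := step6.symm
    _ = ∫ p in polarCoord.target,
        p.1 • Set.indicator (φ ⁻¹' S) (fun z => G (φ z)) (Complex.polarCoord.symm p) := step4.symm
    _ = ∫ z, Set.indicator (φ ⁻¹' S) (fun z => G (φ z)) z := step3
    _ = ∫ z in φ ⁻¹' S, G (φ z) := step2.symm
    _ = ∫ x in S, G x := step1.symm
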